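/- arXiv:2409.11296 — 2 statements merged into one kernel-verified Lean document; each statement's English description precedes it below -/
import Mathlib

section
/- Let n ∈ ℕ with n ≥ 1, let A > 0 and r > 0, and let F : ℝⁿ → ℝⁿ be C² on the closed unit ball {x ∈ ℝⁿ : |x| ≤ 1}. Assume: (a) ‖DF(0)·v‖ ≥ r‖v‖ for every v ∈ ℝⁿ (i.e. the smallest singular value of the Jacobian DF(0) is at least r); (b) |∂²F_k/∂x_i∂x_j(x)| ≤ A for all indices i, j, k and all x in the closed unit ball; (c) r/(4n²A) ≤ 1. Set D₁ = 1/(4n²A) and D₂ = 1/(8n²A). Then: (i) F is injective on the closed ball {x : |x| ≤ D₁ r}; and (ii) the image F({x : |x| ≤ D₁ r}) contains the closed ball {y ∈ ℝⁿ : |y − F(0)| ≤ D₂ r²}. -/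
private lemma sum_abs_le_sqrt_mul_norm {n : ℕ} (u : EuclideanSpace ℝ (Fin n)) :
    ∑ i, |u i| ≤ Real.sqrt n * ‖u‖ := by
  have h2 : ‖u‖ = Real.sqrt (∑ i, |u i| ^ 2) := by
    rw [EuclideanSpace.norm_eq]; congr 1
  have h1 : (∑ i, |u i|) ^ 2 ≤ (n : ℝ) * ∑ i, |u i| ^ 2 := by
    simpa using sq_sum_le_card_mul_sum_sq (s := (Finset.univ : Finset (Fin n)))
      (f := fun i => |u i|)
  calc ∑ i, |u i| = Real.sqrt ((∑ i, |u i|) ^ 2) := (Real.sqrt_sq (by positivity)).symm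
    _ ≤ Real.sqrt ((n : ℝ) * ∑ i, |u i| ^ 2) := Real.sqrt_le_sqrt h1
    _ = Real.sqrt n * ‖u‖ := by rw [Real.sqrt_mul (by positivity), h2]

private lemma euclidean_decomp {n : ℕ} (u : EuclideanSpace ℝ (Fin n)) :
    u = ∑ i, u i • EuclideanSpace.single i (1 : ℝ) := by
  have h := (EuclideanSpace.basisFun (Fin n) ℝ).sum_repr u
  simp only [EuclideanSpace.basisFun_apply, EuclideanSpace.basisFun_repr] at h
  exact h.symm

private lemma bilinear_bound {n : ℕ} {A : ℝ} (hA : 0 ≤ A)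
    (B : EuclideanSpace ℝ (Fin n) →L[ℝ] EuclideanSpace ℝ (Fin n) →L[ℝ] EuclideanSpace ℝ (Fin n))
    (hB : ∀ i j k : Fin n,
      |B (EuclideanSpace.single i 1) (EuclideanSpace.single j 1) k| ≤ A) :
    ‖B‖ ≤ (n : ℝ) ^ 2 * A := by
  apply ContinuousLinearMap.opNorm_le_bound₂ _ (by positivity)
  intro u v
  have key : ∀ k : Fin n, |B u v k| ≤ (n : ℝ) * A * ‖u‖ * ‖v‖ := by
    intro k
    have expand : B u v k = ∑ i, ∑ j,
        u i * v j * (B (EuclideanSpace.single i 1) (EuclideanSpace.single j 1) k) := by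
      have hproj : ∀ w : EuclideanSpace ℝ (Fin n), w k = EuclideanSpace.proj (𝕜 := ℝ) k w :=
        fun _ => rfl
      simp only [hproj]
      conv_lhs => rw [euclidean_decomp u, euclidean_decomp v]
      simp only [map_sum, map_smul, ContinuousLinearMap.sum_apply,
        ContinuousLinearMap.smul_apply, smul_eq_mul]
      rw [Finset.sum_comm]
      refine Finset.sum_congr rfl fun i _ => ?_
      rw [Finset.mul_sum]
      exact Finset.sum_congr rfl fun j _ => by ring
    rw [expand]
    calc |∑ i, ∑ j, u i * v j * (B (EuclideanSpace.single i 1) (EuclideanSpace.single j 1) k)|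
        ≤ ∑ i, ∑ j, |u i| * |v j| * A := by
          refine (Finset.abs_sum_le_sum_abs _ _).trans (Finset.sum_le_sum fun i _ => ?_)
          refine (Finset.abs_sum_le_sum_abs _ _).trans (Finset.sum_le_sum fun j _ => ?_)
          rw [abs_mul, abs_mul]
          exact mul_le_mul_of_nonneg_left (hB i j k) (by positivity)
      _ = (∑ i, |u i|) * (∑ j, |v j|) * A := by
          rw [Finset.sum_mul_sum, Finset.sum_mul]
          exact Finset.sum_congr rfl fun i _ => by rw [Finset.sum_mul]
      _ ≤ (Real.sqrt n * ‖u‖) * (Real.sqrt n * ‖v‖) * A := by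
          have h1 := sum_abs_le_sqrt_mul_norm u
          have h2 := sum_abs_le_sqrt_mul_norm v
          have hv0 : (0:ℝ) ≤ ∑ j, |v j| := Finset.sum_nonneg fun _ _ => abs_nonneg _
          exact mul_le_mul_of_nonneg_right
            (mul_le_mul h1 h2 hv0 (by positivity)) hA
      _ = Real.sqrt n * Real.sqrt n * (A * ‖u‖ * ‖v‖) := by ring
      _ = (n : ℝ) * A * ‖u‖ * ‖v‖ := by
          rw [Real.mul_self_sqrt (Nat.cast_nonneg n)]; ring
  have C0 : (0:ℝ) ≤ (n : ℝ) * A * ‖u‖ * ‖v‖ := by positivity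
  have hnorm : ‖B u v‖ ≤ Real.sqrt ((n : ℝ) * ((n : ℝ) * A * ‖u‖ * ‖v‖) ^ 2) := by
    rw [EuclideanSpace.norm_eq]
    apply Real.sqrt_le_sqrt
    calc ∑ k, ‖B u v k‖ ^ 2 ≤ ∑ _k : Fin n, ((n : ℝ) * A * ‖u‖ * ‖v‖) ^ 2 := by
          refine Finset.sum_le_sum fun k _ => ?_
          rw [Real.norm_eq_abs]
          exact pow_le_pow_left₀ (abs_nonneg _) (key k) 2
      _ = (n : ℝ) * ((n : ℝ) * A * ‖u‖ * ‖v‖) ^ 2 := by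
          rw [Finset.sum_const, Finset.card_univ, Fintype.card_fin, nsmul_eq_mul]
  rw [Real.sqrt_mul (Nat.cast_nonneg n), Real.sqrt_sq C0] at hnorm
  have hs : Real.sqrt n ≤ (n : ℝ) := by
    calc Real.sqrt n ≤ Real.sqrt ((n : ℝ) ^ 2) :=
          Real.sqrt_le_sqrt (by exact_mod_cast Nat.le_self_pow two_ne_zero n)
      _ = (n : ℝ) := Real.sqrt_sq (Nat.cast_nonneg n)
  calc ‖B u v‖ ≤ Real.sqrt n * ((n : ℝ) * A * ‖u‖ * ‖v‖) := hnorm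
    _ ≤ (n : ℝ) * ((n : ℝ) * A * ‖u‖ * ‖v‖) := mul_le_mul_of_nonneg_right hs C0
    _ = (n : ℝ) ^ 2 * A * ‖u‖ * ‖v‖ := by ring


open Metric Set

/-- Quantitative inverse function theorem with singular values: if `F` is `C²` on the
closed unit ball, its Jacobian at `0` has smallest singular value at least `r`
(i.e. `‖DF(0)v‖ ≥ r‖v‖` for all `v`), all second partials are bounded by `A` on the
closed unit ball, and `r/(4n²A) ≤ 1`, then with `D₁ = 1/(4n²A)` and `D₂ = 1/(8n²A)`,
`F` is injective on the ball of radius `D₁ r` and its image of that ball contains the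
closed ball of radius `D₂ r²` around `F(0)`. -/
theorem quantitative_inverse_function_theorem
    (n : ℕ) (hn : 1 ≤ n) (A r : ℝ) (hA : 0 < A) (hr : 0 < r)
    (F : EuclideanSpace ℝ (Fin n) → EuclideanSpace ℝ (Fin n))
    (hF : ContDiffOn ℝ 2 F (Metric.closedBall 0 1))
    (hjac : ∀ v : EuclideanSpace ℝ (Fin n), r * ‖v‖ ≤ ‖fderiv ℝ F 0 v‖)
    (hsecond : ∀ x ∈ Metric.closedBall (0 : EuclideanSpace ℝ (Fin n)) 1,
      ∀ i j k : Fin n,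
        |iteratedFDerivWithin ℝ 2 F (Metric.closedBall 0 1) x
            ![EuclideanSpace.single i 1, EuclideanSpace.single j 1] k| ≤ A)
    (hc : r / (4 * (n : ℝ) ^ 2 * A) ≤ 1) :
    Set.InjOn F (Metric.closedBall 0 (1 / (4 * (n : ℝ) ^ 2 * A) * r)) ∧
    Metric.closedBall (F 0) (1 / (8 * (n : ℝ) ^ 2 * A) * r ^ 2)
      ⊆ F '' Metric.closedBall 0 (1 / (4 * (n : ℝ) ^ 2 * A) * r) := by
  have hn1 : (1 : ℝ) ≤ (n : ℝ) := by exact_mod_cast hn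
  have hnpos : (0 : ℝ) < (n : ℝ) := lt_of_lt_of_le one_pos hn1
  set s : Set (EuclideanSpace ℝ (Fin n)) := Metric.closedBall 0 1 with hs_def
  set ρ : ℝ := 1 / (4 * (n : ℝ) ^ 2 * A) * r with hρ_def
  have hρpos : 0 < ρ := by positivity
  have hρ1 : ρ ≤ 1 := by
    have : ρ = r / (4 * (n : ℝ) ^ 2 * A) := by ring
    rw [this]; exact hc
  set s' : Set (EuclideanSpace ℝ (Fin n)) := Metric.closedBall 0 ρ with hs'_def
  have hsub : s' ⊆ s := Metric.closedBall_subset_closedBall hρ1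
  have hu : UniqueDiffOn ℝ s := uniqueDiffOn_convex (convex_closedBall _ _)
    (by rw [interior_closedBall (0 : EuclideanSpace ℝ (Fin n)) one_ne_zero]
        exact Metric.nonempty_ball.2 one_pos)
  have hu' : UniqueDiffOn ℝ s' := uniqueDiffOn_convex (convex_closedBall _ _)
    (by rw [interior_closedBall (0 : EuclideanSpace ℝ (Fin n)) (ne_of_gt hρpos)]
        exact Metric.nonempty_ball.2 hρpos)
  have hC1 : ContDiffOn ℝ 1 (fderivWithin ℝ F s) s :=
    hF.fderivWithin hu (by norm_num)
  have hdiff2 : DifferentiableOn ℝ (fderivWithin ℝ F s) s := hC1.differentiableOn one_ne_zero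
  have hdiffF : DifferentiableOn ℝ F s := hF.differentiableOn (by norm_num)
  have hBnorm : ∀ x ∈ s, ‖fderivWithin ℝ (fderivWithin ℝ F s) s x‖ ≤ (n : ℝ) ^ 2 * A := by
    intro x hx
    refine bilinear_bound hA.le _ fun i j k => ?_
    have h2 := hsecond x hx i j k
    rw [iteratedFDerivWithin_two_apply F hu hx] at h2
    simpa using h2
  have hLip : ∀ x ∈ s, ‖fderivWithin ℝ F s x - fderivWithin ℝ F s 0‖ ≤ (n : ℝ) ^ 2 * A * ‖x‖ := by
    intro x hx
    have h0 : (0 : EuclideanSpace ℝ (Fin n)) ∈ s := Metric.mem_closedBall_self one_pos.le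
    have := (convex_closedBall (0 : EuclideanSpace ℝ (Fin n)) 1).norm_image_sub_le_of_norm_fderivWithin_le
      hdiff2 hBnorm h0 hx
    rwa [sub_zero] at this
  have h00 : fderivWithin ℝ F s 0 = fderiv ℝ F 0 :=
    fderivWithin_of_mem_nhds (Metric.closedBall_mem_nhds 0 one_pos)
  have hbound' : ∀ z ∈ s', ‖fderivWithin ℝ F s' z - fderiv ℝ F 0‖ ≤ r / 4 := by
    intro z hz
    rw [fderivWithin_subset hsub (hu' z hz) (hdiffF z (hsub hz)), ← h00]
    calc ‖fderivWithin ℝ F s z - fderivWithin ℝ F s 0‖ ≤ (n : ℝ) ^ 2 * A * ‖z‖ :=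
          hLip z (hsub hz)
      _ ≤ (n : ℝ) ^ 2 * A * ρ := by
          refine mul_le_mul_of_nonneg_left ?_ (by positivity)
          simpa using Metric.mem_closedBall.1 hz
      _ = r / 4 := by rw [hρ_def]; field_simp
  set c4 : NNReal := ⟨r / 4, by positivity⟩ with hc4_def
  have happrox : ApproximatesLinearOn F (fderiv ℝ F 0) s' c4 := by
    intro x hx y hy
    have := (convex_closedBall (0 : EuclideanSpace ℝ (Fin n)) ρ).norm_image_sub_le_of_norm_fderivWithin_le'
      (hdiffF.mono hsub) hbound' hy hx
    exact this
  -- the linear equivalence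
  have hinj0 : Function.Injective (fderiv ℝ F 0) := by
    intro a b hab
    have h := hjac (a - b)
    rw [map_sub, hab, sub_self, norm_zero] at h
    have : ‖a - b‖ ≤ 0 := nonpos_of_mul_nonpos_right ?_ hr
    · rwa [norm_le_zero_iff, sub_eq_zero] at this
    · linarith
  set e : EuclideanSpace ℝ (Fin n) ≃L[ℝ] EuclideanSpace ℝ (Fin n) :=
    ((fderiv ℝ F 0).toLinearMap.linearEquivOfInjective hinj0 rfl).toContinuousLinearEquiv
    with he_def
  have he : (e : EuclideanSpace ℝ (Fin n) →L[ℝ] EuclideanSpace ℝ (Fin n)) = fderiv ℝ F 0 := by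
    ext v; rfl
  have heapp : ∀ v, e v = fderiv ℝ F 0 v := fun v => by rw [← he]; rfl
  set N : ℝ := ‖(e.symm : EuclideanSpace ℝ (Fin n) →L[ℝ] EuclideanSpace ℝ (Fin n))‖ with hN_def
  have hsymm : ∀ y, ‖e.symm y‖ ≤ r⁻¹ * ‖y‖ := by
    intro y
    have h := hjac (e.symm y)
    rw [← heapp, e.apply_symm_apply] at h
    rw [inv_mul_eq_div, le_div_iff₀ hr]
    linarith [h]
  have hN : N ≤ r⁻¹ := ContinuousLinearMap.opNorm_le_bound _ (by positivity) hsymm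
  have hNpos : 0 < N := by
    rcases eq_or_lt_of_le (norm_nonneg (e.symm : EuclideanSpace ℝ (Fin n) →L[ℝ] EuclideanSpace ℝ (Fin n))) with h | h
    · exfalso
      have h0 : (e.symm : EuclideanSpace ℝ (Fin n) →L[ℝ] EuclideanSpace ℝ (Fin n)) = 0 :=
        ContinuousLinearMap.opNorm_zero_iff _ |>.1 h.symm
      have hv : e.symm (e (EuclideanSpace.single (⟨0, hn⟩ : Fin n) (1 : ℝ)))
          = EuclideanSpace.single (⟨0, hn⟩ : Fin n) (1 : ℝ) := e.symm_apply_apply _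
      rw [show (e.symm : _) = _ from rfl] at hv
      have : EuclideanSpace.single (⟨0, hn⟩ : Fin n) (1 : ℝ) = 0 := by
        rw [← hv, show e.symm (e _) = (e.symm : EuclideanSpace ℝ (Fin n) →L[ℝ] _) (e _) from rfl,
          h0]; simp
      have := congrArg (fun w : EuclideanSpace ℝ (Fin n) => w (⟨0, hn⟩ : Fin n)) this
      simpa using this
    · exact h
  have hrN : r ≤ N⁻¹ := by
    rw [le_inv_comm₀ hr hNpos] at *
    exact hN
  have hc4N : c4 < (‖(e.symm : EuclideanSpace ℝ (Fin n) →L[ℝ] EuclideanSpace ℝ (Fin n))‖₊)⁻¹ := by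
    rw [← NNReal.coe_lt_coe, NNReal.coe_inv, coe_nnnorm]
    have hcoe : (c4 : ℝ) = r / 4 := rfl
    rw [hcoe]
    calc r / 4 < r := by linarith
      _ ≤ N⁻¹ := hrN
  have happrox' : ApproximatesLinearOn F
      (e : EuclideanSpace ℝ (Fin n) →L[ℝ] EuclideanSpace ℝ (Fin n)) s' c4 := by rwa [he]
  constructor
  · exact happrox'.injOn (Or.inr hc4N)
  · have hsurj := happrox'.surjOn_closedBall_of_nonlinearRightInverse
      e.toNonlinearRightInverse hρpos.le (subset_refl s')
    have hnn : ((e.toNonlinearRightInverse.nnnorm : ℝ)) = N := rfl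
    intro y hy
    refine hsurj ?_
    have hrad : 1 / (8 * (n : ℝ) ^ 2 * A) * r ^ 2
        ≤ ((e.toNonlinearRightInverse.nnnorm : ℝ)⁻¹ - c4) * ρ := by
      rw [hnn]
      have h1 : (c4 : ℝ) = r / 4 := rfl
      rw [h1]
      have h2 : (3 / 4 : ℝ) * r ≤ N⁻¹ - r / 4 := by linarith
      calc 1 / (8 * (n : ℝ) ^ 2 * A) * r ^ 2 = (1 / 2 * r) * ρ := by
            rw [hρ_def]; field_simp; ring
        _ ≤ (3 / 4 * r) * ρ := mul_le_mul_of_nonneg_right (by linarith) hρpos.le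
        _ ≤ (N⁻¹ - r / 4) * ρ := mul_le_mul_of_nonneg_right h2 hρpos.le
    exact Metric.closedBall_subset_closedBall hrad hy
end

section
/- Let M be the 6×6 real matrix whose rows are: row 1 = (0, −ρ₃, 0, −β₃ + ν₂, 0, −(ρ₂ − ρ₃)); row 2 = (ρ₃ν₂, 0, −ρ₃, −δ₃ + α₃ν₂, 0, −(ρ₂α₂ − ρ₃α₃)); row 3 = (0, ν₂ρ₃, 0, γ₃ − 2ρ₃E₃ − C₃/2 + β₃ν₂, 0, −(ρ₂β₂ − ρ₃β₃)); row 4 = (0, ρ₃, 0, β₃ − ν₊, −(ρ₃ − ρ₀), 0); row 5 = (−ν₊ρ₃, 0, ρ₃, δ₃ − ν₊α₃, −(ρ₃α₃ − ρ₀u₊), 0); row 6 = (0, −ν₊ρ₃, 0, −γ₃ + 2ρ₃E₃ + C₃/2 − ν₊β₃, −(ρ₃β₃ − ρ₀w), 0), with the exact rational constants listed in the context. Then the smallest singular value of M is at least 2; equivalently, ‖M·v‖ ≥ 2‖v‖ for every v ∈ ℝ⁶ (Euclidean norm). -/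
/- The Jacobian DΓ of the correction map at the approximate solution point has
smallest singular value at least 2. -/

namespace Stmt11

noncomputable def ρ0 : ℝ := 2708112612978501/281474976710656
noncomputable def ρ2 : ℝ := 2057060350258899/562949953421312
noncomputable def ρ3 : ℝ := 3062207031116133/281474976710656
noncomputable def α2 : ℝ := -4833381446756075/562949953421312
noncomputable def α3 : ℝ := 3121572020159473/562949953421312
noncomputable def β2 : ℝ := -1114286601116939/70368744177664
noncomputable def β3 : ℝ := -6219197795695073/562949953421312
noncomputable def γ3 : ℝ := -8954832877447991/140737488355328
noncomputable def δ3 : ℝ := -2871256077954219/35184372088832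
noncomputable def ν2 : ℝ := -4856156003780791/562949953421312
noncomputable def νp : ℝ := 7162856387903725/562949953421312
noncomputable def E3 : ℝ := 5400383921383283/1125899906842624
noncomputable def C3 : ℝ := 1855257252703141/8796093022208
noncomputable def up : ℝ := 3603433899522037/562949953421312
noncomputable def w : ℝ := -996118042660627/70368744177664

noncomputable def M : Matrix (Fin 6) (Fin 6) ℝ :=
  !![0, -ρ3, 0, -β3 + ν2, 0, -(ρ2 - ρ3);
     ρ3 * ν2, 0, -ρ3, -δ3 + α3 * ν2, 0, -(ρ2 * α2 - ρ3 * α3);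
     0, ν2 * ρ3, 0, γ3 - 2 * ρ3 * E3 - C3 / 2 + β3 * ν2, 0, -(ρ2 * β2 - ρ3 * β3);
     0, ρ3, 0, β3 - νp, -(ρ3 - ρ0), 0;
     -νp * ρ3, 0, ρ3, δ3 - νp * α3, -(ρ3 * α3 - ρ0 * up), 0;
     0, -νp * ρ3, 0, -γ3 + 2 * ρ3 * E3 + C3 / 2 - νp * β3, -(ρ3 * β3 - ρ0 * w), 0]

set_option maxHeartbeats 3200000 in
/-- The smallest singular value of the Jacobian `M = DΓ` is at least `2`:
equivalently, `‖M v‖ ≥ 2 ‖v‖` for every `v ∈ ℝ⁶` with the Euclidean norm. -/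
theorem jacobian_smallest_singular_value_ge_two :
    ∀ v : EuclideanSpace ℝ (Fin 6), 2 * ‖v‖ ≤ ‖Matrix.toEuclideanLin M v‖ := by
  intro v
  set x0 := v 0 with hx0
  set x1 := v 1 with hx1
  set x2 := v 2 with hx2
  set x3 := v 3 with hx3
  set x4 := v 4 with hx4
  set x5 := v 5 with hx5
  have key : 4 * (x0^2 + x1^2 + x2^2 + x3^2 + x4^2 + x5^2)
      ≤ ∑ i, (∑ j, M i j * v j)^2 := by
    have hpos : (0:ℝ) ≤ (351069937497547647385887134962995404338339555012919053519385749/12554203470773361527671578846415332832204710888928069025792) * (x0 + (-6088356557983444373245468308595036051837727877743140254253056/351069937497547647385887134962995404338339555012919053519385749) * x2 + (449266338880097226136889163643173028401583788009564729198123105/702139874995095294771774269925990808676679110025838107038771498) * x3 + (-2189082980443153289920023033875662727500681528511291544963450/351069937497547647385887134962995404338339555012919053519385749) * x4 + (-432143637438832247629467803599647820881369527809115619503143329/1404279749990190589543548539851981617353358220051676214077542996) * x5)^2 + (354041662880107306611022094826058390855398420434454519027823765/12554203470773361527671578846415332832204710888928069025792) * (x1 + (-1026328759124086003553557134788030310305370141159396518249511747/708083325760214613222044189652116781710796840868909038055647530)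 * x3 + (55288553331555490151738250300791179269111160073811045200972211/708083325760214613222044189652116781710796840868909038055647530) * x4 + (144885815952309805413564274423823391865247244571887522033601203/708083325760214613222044189652116781710796840868909038055647530) * x5)^2 + (779856645710344480435610736210236218052769776235053015165151912260635096308206364810141296641/3476828257741041058248894999735517432568806760431506409388257442046266674653979252210270208) * (x2 + (-5954012940692856219375688434503690661207491606920086411212623749752982859020312963055912724088/779856645710344480435610736210236218052769776235053015165151912260635096308206364810141296641) * x3 + (20904356470495536491092602068182253075295976273471693092208396885605507111102628158033309477974968359767847/439020262377939039992553137217135907565911538551592151804873212170245133675207940279972936838300257843412992) * x4 + (-17957488351326439893725863049096051065993324999732709162129928182761193932240777465313725830985599096593285979/3512162099023512319940425097737087260527292308412737214438985697361961069401663522239783494706402062747303936) * x5)^2 + (124990499188436684839138703694940997293759291886835695380069009282961117577640131247764523809934235581583218613604825935734818870712279528262526135930576103414234140772408464677843140274268565415804506616438317497650601/866559367121278133756099797092647443469902040283418661288074947573209104046650622198393782413544816052638349465489823317043683524171860095067600813262347283813362959803650189849737551066929879876704278175830507520) * (x3 + (-3932953412039326081248244231951733194346591710445845892204104899093230095533877942948755038088902412089428804145824244374304921031564934859914996678055780845883985134091199354308042107639847504115187893848225492140409/166653998917915579785518271593254663058345722515780927173425345710614823436853508330352698413245647442110958151473101247646425160949706037683368181240768137885645521029877952903790853699024753887739342155251089996867468)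 * x4 + (22336646839396048739632503920531937728906472949768747008702232661809686689144593968624391946984988989175094881075725471827729489767089572602038182595214994617020689307006597619620027163347968326360912561775962939342033/166653998917915579785518271593254663058345722515780927173425345710614823436853508330352698413245647442110958151473101247646425160949706037683368181240768137885645521029877952903790853699024753887739342155251089996867468) * x5)^2 + (159867731310442443934338159262342743535269597210325895738372206970626541505789184320929177373441014403462059725678185782484068777988503523170363675239415039847204524077080705436943298284838212850000515503308124974903004304653106115473474543045400287/105629520879365188947264102345212938585515006815305595870988506641425419169609270550846874597470112860203214581665037987531720463093486414358594219214371357680465222998310267792227519947428670861519123782248785155309849060078885364794294577328553984) * (x4 + (698552328439393308698035241496744838758711610767117996673503648541901450886722670033824306093805377818018349986763132557345683774089273148781105688605008958585506745874633718493478378182042576363296784039072180764704507318510407527847973119192704471/159867731310442443934338159262342743535269597210325895738372206970626541505789184320929177373441014403462059725678185782484068777988503523170363675239415039847204524077080705436943298284838212850000515503308124974903004304653106115473474543045400287) * x5)^2 + (23168621131408100815105033583120849579222469647150284425443555454017591819852213155569160643275978454569194551599747434567213042744802315073641984410181993773536611528317062130325895078184822063435596357938742831987165680967664541822910305407247892036018414936672340660946050501697/810625702211230667817792667176001186043850577831585499512844929725941437146082146493463446678959109604954089594789241026238982056435834908369644947185377420398286690491191028229983575397678792591667292337539161985954454255187492286054964011654797066856261682967301192983561371648)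 * (x5)^2 := by positivity
    have hS : ∑ i, (∑ j, M i j * v j)^2
        - 4 * (x0^2 + x1^2 + x2^2 + x3^2 + x4^2 + x5^2)
        = (351069937497547647385887134962995404338339555012919053519385749/12554203470773361527671578846415332832204710888928069025792) * (x0 + (-6088356557983444373245468308595036051837727877743140254253056/351069937497547647385887134962995404338339555012919053519385749) * x2 + (449266338880097226136889163643173028401583788009564729198123105/702139874995095294771774269925990808676679110025838107038771498) * x3 + (-2189082980443153289920023033875662727500681528511291544963450/351069937497547647385887134962995404338339555012919053519385749) * x4 + (-432143637438832247629467803599647820881369527809115619503143329/1404279749990190589543548539851981617353358220051676214077542996) * x5)^2 + (354041662880107306611022094826058390855398420434454519027823765/12554203470773361527671578846415332832204710888928069025792) * (x1 + (-1026328759124086003553557134788030310305370141159396518249511747/708083325760214613222044189652116781710796840868909038055647530) * x3 + (55288553331555490151738250300791179269111160073811045200972211/708083325760214613222044189652116781710796840868909038055647530) * x4 + (144885815952309805413564274423823391865247244571887522033601203/708083325760214613222044189652116781710796840868909038055647530) * x5)^2 + (779856645710344480435610736210236218052769776235053015165151912260635096308206364810141296641/3476828257741041058248894999735517432568806760431506409388257442046266674653979252210270208)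 * (x2 + (-5954012940692856219375688434503690661207491606920086411212623749752982859020312963055912724088/779856645710344480435610736210236218052769776235053015165151912260635096308206364810141296641) * x3 + (20904356470495536491092602068182253075295976273471693092208396885605507111102628158033309477974968359767847/439020262377939039992553137217135907565911538551592151804873212170245133675207940279972936838300257843412992) * x4 + (-17957488351326439893725863049096051065993324999732709162129928182761193932240777465313725830985599096593285979/3512162099023512319940425097737087260527292308412737214438985697361961069401663522239783494706402062747303936) * x5)^2 + (124990499188436684839138703694940997293759291886835695380069009282961117577640131247764523809934235581583218613604825935734818870712279528262526135930576103414234140772408464677843140274268565415804506616438317497650601/866559367121278133756099797092647443469902040283418661288074947573209104046650622198393782413544816052638349465489823317043683524171860095067600813262347283813362959803650189849737551066929879876704278175830507520) * (x3 + (-3932953412039326081248244231951733194346591710445845892204104899093230095533877942948755038088902412089428804145824244374304921031564934859914996678055780845883985134091199354308042107639847504115187893848225492140409/166653998917915579785518271593254663058345722515780927173425345710614823436853508330352698413245647442110958151473101247646425160949706037683368181240768137885645521029877952903790853699024753887739342155251089996867468) * x4 + (22336646839396048739632503920531937728906472949768747008702232661809686689144593968624391946984988989175094881075725471827729489767089572602038182595214994617020689307006597619620027163347968326360912561775962939342033/166653998917915579785518271593254663058345722515780927173425345710614823436853508330352698413245647442110958151473101247646425160949706037683368181240768137885645521029877952903790853699024753887739342155251089996867468)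 * x5)^2 + (159867731310442443934338159262342743535269597210325895738372206970626541505789184320929177373441014403462059725678185782484068777988503523170363675239415039847204524077080705436943298284838212850000515503308124974903004304653106115473474543045400287/105629520879365188947264102345212938585515006815305595870988506641425419169609270550846874597470112860203214581665037987531720463093486414358594219214371357680465222998310267792227519947428670861519123782248785155309849060078885364794294577328553984) * (x4 + (698552328439393308698035241496744838758711610767117996673503648541901450886722670033824306093805377818018349986763132557345683774089273148781105688605008958585506745874633718493478378182042576363296784039072180764704507318510407527847973119192704471/159867731310442443934338159262342743535269597210325895738372206970626541505789184320929177373441014403462059725678185782484068777988503523170363675239415039847204524077080705436943298284838212850000515503308124974903004304653106115473474543045400287) * x5)^2 + (23168621131408100815105033583120849579222469647150284425443555454017591819852213155569160643275978454569194551599747434567213042744802315073641984410181993773536611528317062130325895078184822063435596357938742831987165680967664541822910305407247892036018414936672340660946050501697/810625702211230667817792667176001186043850577831585499512844929725941437146082146493463446678959109604954089594789241026238982056435834908369644947185377420398286690491191028229983575397678792591667292337539161985954454255187492286054964011654797066856261682967301192983561371648) * (x5)^2 := by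
      simp only [Fin.sum_univ_six,
        (show M 0 0 = (0 : ℝ) from rfl),
        (show M 0 1 = (-ρ3 : ℝ) from rfl),
        (show M 0 2 = (0 : ℝ) from rfl),
        (show M 0 3 = (-β3 + ν2 : ℝ) from rfl),
        (show M 0 4 = (0 : ℝ) from rfl),
        (show M 0 5 = (-(ρ2 - ρ3) : ℝ) from rfl),
        (show M 1 0 = (ρ3 * ν2 : ℝ) from rfl),
        (show M 1 1 = (0 : ℝ) from rfl),
        (show M 1 2 = (-ρ3 : ℝ) from rfl),
        (show M 1 3 = (-δ3 + α3 * ν2 : ℝ) from rfl),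
        (show M 1 4 = (0 : ℝ) from rfl),
        (show M 1 5 = (-(ρ2 * α2 - ρ3 * α3) : ℝ) from rfl),
        (show M 2 0 = (0 : ℝ) from rfl),
        (show M 2 1 = (ν2 * ρ3 : ℝ) from rfl),
        (show M 2 2 = (0 : ℝ) from rfl),
        (show M 2 3 = (γ3 - 2 * ρ3 * E3 - C3 / 2 + β3 * ν2 : ℝ) from rfl),
        (show M 2 4 = (0 : ℝ) from rfl),
        (show M 2 5 = (-(ρ2 * β2 - ρ3 * β3) : ℝ) from rfl),
        (show M 3 0 = (0 : ℝ) from rfl),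
        (show M 3 1 = (ρ3 : ℝ) from rfl),
        (show M 3 2 = (0 : ℝ) from rfl),
        (show M 3 3 = (β3 - νp : ℝ) from rfl),
        (show M 3 4 = (-(ρ3 - ρ0) : ℝ) from rfl),
        (show M 3 5 = (0 : ℝ) from rfl),
        (show M 4 0 = (-νp * ρ3 : ℝ) from rfl),
        (show M 4 1 = (0 : ℝ) from rfl),
        (show M 4 2 = (ρ3 : ℝ) from rfl),
        (show M 4 3 = (δ3 - νp * α3 : ℝ) from rfl),
        (show M 4 4 = (-(ρ3 * α3 - ρ0 * up) : ℝ) from rfl),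
        (show M 4 5 = (0 : ℝ) from rfl),
        (show M 5 0 = (0 : ℝ) from rfl),
        (show M 5 1 = (-νp * ρ3 : ℝ) from rfl),
        (show M 5 2 = (0 : ℝ) from rfl),
        (show M 5 3 = (-γ3 + 2 * ρ3 * E3 + C3 / 2 - νp * β3 : ℝ) from rfl),
        (show M 5 4 = (-(ρ3 * β3 - ρ0 * w) : ℝ) from rfl),
        (show M 5 5 = (0 : ℝ) from rfl),
        ρ0, ρ2, ρ3, α2, α3, β2, β3, γ3, δ3, ν2, νp, E3, C3, up, w,
        ← hx0, ← hx1, ← hx2, ← hx3, ← hx4, ← hx5]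
      ring
    linarith [hS, hpos]
  have hMv : ∀ i, (Matrix.toEuclideanLin M v) i = ∑ j, M i j * v j := by
    intro i
    simp [Matrix.toEuclideanLin_apply, Matrix.mulVec, dotProduct]
  have hnormM : ‖Matrix.toEuclideanLin M v‖^2 = ∑ i, (∑ j, M i j * v j)^2 := by
    rw [EuclideanSpace.norm_eq, Real.sq_sqrt (by positivity)]
    exact Finset.sum_congr rfl fun i _ => by rw [hMv i, Real.norm_eq_abs, sq_abs]
  have hnormv : ‖v‖^2 = x0^2 + x1^2 + x2^2 + x3^2 + x4^2 + x5^2 := by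
    rw [EuclideanSpace.norm_eq, Real.sq_sqrt (by positivity)]
    simp [Fin.sum_univ_six, Real.norm_eq_abs, sq_abs, ← hx0, ← hx1, ← hx2, ← hx3, ← hx4, ← hx5]
  have hsq : (2 * ‖v‖)^2 ≤ ‖Matrix.toEuclideanLin M v‖^2 := by
    rw [mul_pow, hnormM, hnormv]; linarith [key]
  calc 2 * ‖v‖ = Real.sqrt ((2 * ‖v‖)^2) := by
        rw [Real.sqrt_sq (by positivity)]
    _ ≤ Real.sqrt (‖Matrix.toEuclideanLin M v‖^2) := Real.sqrt_le_sqrt hsq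
    _ = ‖Matrix.toEuclideanLin M v‖ := Real.sqrt_sq (norm_nonneg _)

end Stmt11
end
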